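/- Noncommutative Weierstrass preparation (finite version): Let p be a prime, k, n ≥ 1, A_k = M_n(ℤ/p^k ℤ), and M(t), N(t) ∈ A_k[t]. Then for every X ∈ A_k, there exist unique U(t) ∈ A_k[t] and X' ∈ A_k such that (X + I_n t + p I_n t² M(t)) · U(t) = X' + I_n t + p I_n t² N(t) in A_k[t]. Moreover U(t) ∈ I_n + p A_k[t] and X' ≡ X (mod p). -/

import Mathlib

open Polynomial

section Aux
variable {S : Type*} [Ring S] [Nontrivial S]

omit [Nontrivial S] in
/-- uniqueness of division by `X + C a`: if `(X + C a) * U` is constant, then `U = 0`. -/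
lemma aux_div_unique (a : S) (U : S[X]) (y : S)
    (h : (Polynomial.X + Polynomial.C a) * U = Polynomial.C y) : U = 0 ∧ y = 0 := by
  have hU : U = 0 := by
    by_contra hU
    have hc : ((Polynomial.X + Polynomial.C a) * U).coeff (U.natDegree + 1) = U.leadingCoeff := by
      rw [add_mul, Polynomial.coeff_add, Polynomial.coeff_X_mul, Polynomial.coeff_C_mul,
        Polynomial.coeff_natDegree_succ_eq_zero, mul_zero, add_zero]
      rfl
    rw [h, Polynomial.coeff_C, if_neg (Nat.succ_ne_zero _)] at hc
    exact hU (Polynomial.leadingCoeff_eq_zero.mp hc.symm)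
  refine ⟨hU, ?_⟩
  rw [hU, mul_zero] at h
  exact (Polynomial.C_eq_zero.mp h.symm)

/-- existence of division by `X + C a` with constant remainder -/
lemma aux_div_exists (a : S) (T : S[X]) :
    ∃ (U : S[X]) (r : S), (Polynomial.X + Polynomial.C a) * U + Polynomial.C r = T := by
  have hm : (Polynomial.X + Polynomial.C a).Monic := Polynomial.monic_X_add_C a
  refine ⟨T /ₘ (Polynomial.X + Polynomial.C a), (T %ₘ (Polynomial.X + Polynomial.C a)).coeff 0, ?_⟩
  have hd : (T %ₘ (Polynomial.X + Polynomial.C a)).degree < 1 := by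
    simpa [Polynomial.degree_X_add_C] using Polynomial.degree_modByMonic_lt T hm
  have : Polynomial.C ((T %ₘ (Polynomial.X + Polynomial.C a)).coeff 0)
      = T %ₘ (Polynomial.X + Polynomial.C a) :=
    (Polynomial.eq_C_of_degree_le_zero (Nat.WithBot.lt_one_iff_le_zero.mp hd)).symm
  rw [this, add_comm]
  exact Polynomial.modByMonic_add_div T (Polynomial.X + Polynomial.C a)

omit [Nontrivial S] in
lemma aux_central (p : ℕ) (j : ℕ) (x y : S[X]) :
    x * ((p : S[X]) ^ j * y) = (p : S[X]) ^ j * (x * y) := by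
  rw [← mul_assoc, ← ((Nat.cast_commute p x).pow_left j).eq, mul_assoc]

omit [Nontrivial S] in
lemma aux_pcC (p : ℕ) (j : ℕ) (y : S) :
    (p : S[X]) ^ j * Polynomial.C y = Polynomial.C ((p : S) ^ j * y) := by
  rw [map_mul, map_pow, map_natCast]

/-- existence part -/
lemma aux_exists (p k : ℕ) (hp0 : ((p : S[X])) ^ k = 0) (a : S) (M T : S[X]) :
    ∃ (U : S[X]) (Y : S),
      (Polynomial.C a + Polynomial.X + (p : S[X]) * Polynomial.X ^ 2 * M) * U
        = Polynomial.C Y + T := by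
  set q : S[X] := Polynomial.X + Polynomial.C a with hq
  set F : S[X] := Polynomial.C a + Polynomial.X + (p : S[X]) * Polynomial.X ^ 2 * M with hFdef
  have hF : F = q + (p : S[X]) * (Polynomial.X ^ 2 * M) := by
    rw [hFdef, hq, add_comm (Polynomial.C a) Polynomial.X, mul_assoc]
  have claim : ∀ j : ℕ, ∃ (U : S[X]) (Y : S) (E : S[X]),
      F * U + (p : S[X]) ^ j * E = Polynomial.C Y + T := by
    intro j
    induction j with
    | zero => exact ⟨0, 0, T, by simp⟩
    | succ j ih =>
      obtain ⟨U, Y, E, hUv⟩ := ih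
      obtain ⟨U₁, R₁, hdiv⟩ := aux_div_exists a E
      refine ⟨U + (p : S[X]) ^ j * U₁, Y - (p : S) ^ j * R₁,
        -(Polynomial.X ^ 2 * M * U₁), ?_⟩
      have hqU₁ : q * U₁ = E - Polynomial.C R₁ := eq_sub_of_add_eq hdiv
      have hFU₁ : F * U₁ = E - Polynomial.C R₁
          + (p : S[X]) * (Polynomial.X ^ 2 * M * U₁) := by
        rw [hF, add_mul, hqU₁, mul_assoc]
      have hFU : F * U = Polynomial.C Y + T - (p : S[X]) ^ j * E := eq_sub_of_add_eq hUv
      calc F * (U + (p : S[X]) ^ j * U₁)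
            + (p : S[X]) ^ (j + 1) * -(Polynomial.X ^ 2 * M * U₁)
          = F * U + (p : S[X]) ^ j * (F * U₁)
            + (p : S[X]) ^ (j + 1) * -(Polynomial.X ^ 2 * M * U₁) := by
            rw [mul_add, aux_central]
        _ = (Polynomial.C Y + T - (p : S[X]) ^ j * E)
            + (p : S[X]) ^ j * (E - Polynomial.C R₁
              + (p : S[X]) * (Polynomial.X ^ 2 * M * U₁))
            + (p : S[X]) ^ (j + 1) * -(Polynomial.X ^ 2 * M * U₁) := by rw [hFU, hFU₁]
        _ = Polynomial.C Y - (p : S[X]) ^ j * Polynomial.C R₁ + T := by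
            simp only [mul_sub, mul_add, mul_neg, pow_succ, mul_assoc]
            abel
        _ = Polynomial.C (Y - (p : S) ^ j * R₁) + T := by rw [map_sub, aux_pcC]
  obtain ⟨U, Y, E, h⟩ := claim k
  rw [hp0, zero_mul, add_zero] at h
  exact ⟨U, Y, h⟩

/-- injectivity part -/
lemma aux_zero (p k : ℕ) (hp0 : ((p : S[X])) ^ k = 0) (a : S) (M : S[X]) (U : S[X]) (Y : S)
    (h : (Polynomial.C a + Polynomial.X + (p : S[X]) * Polynomial.X ^ 2 * M) * U
      = Polynomial.C Y) : U = 0 ∧ Y = 0 := by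
  set q : S[X] := Polynomial.X + Polynomial.C a with hq
  have hqU : q * U + (p : S[X]) * (Polynomial.X ^ 2 * M * U) = Polynomial.C Y := by
    have h' : (Polynomial.C a + Polynomial.X + (p : S[X]) * Polynomial.X ^ 2 * M) * U
        = q * U + (p : S[X]) * (Polynomial.X ^ 2 * M * U) := by rw [hq]; noncomm_ring
    rw [← h', h]
  have claim : ∀ m : ℕ, (p : S[X]) ^ (k - m) * U = 0 ∧ (p : S) ^ (k - m) * Y = 0 := by
    intro m
    induction m with
    | zero =>
      constructor
      · rw [Nat.sub_zero, hp0, zero_mul]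
      · have hp0' : ((p : S)) ^ k = 0 := by
          have := hp0
          rw [← map_natCast (Polynomial.C : S →+* S[X]) p, ← map_pow] at this
          exact Polynomial.C_eq_zero.mp this
        rw [Nat.sub_zero, hp0', zero_mul]
    | succ m ih =>
      by_cases hkm : k ≤ m
      · have e1 : k - (m + 1) = k - m := by omega
        rw [e1]; exact ih
      · have e : k - m = (k - (m + 1)) + 1 := by omega
        set e' : ℕ := k - (m + 1) with he'
        have key : q * ((p : S[X]) ^ e' * U) = Polynomial.C ((p : S) ^ e' * Y) := by
          have h2 := congrArg (fun z => (p : S[X]) ^ e' * z) hqU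
          simp only [mul_add] at h2
          rw [← aux_central p e' q U] at h2
          have h3 : (p : S[X]) ^ e' * ((p : S[X]) * (Polynomial.X ^ 2 * M * U)) = 0 := by
            rw [← mul_assoc, ← pow_succ, ← e, ← aux_central, ih.1, mul_zero]
          rw [h3, add_zero, aux_pcC] at h2
          exact h2
        obtain ⟨h4, h5⟩ := aux_div_unique a _ _ key
        exact ⟨h4, h5⟩
  have := claim k
  rw [Nat.sub_self] at this
  simpa using this

/-- structure of any solution -/
lemma aux_more (p : ℕ) (a X' : S) (M N U : S[X])
    (h : (Polynomial.C a + Polynomial.X + (p : S[X]) * Polynomial.X ^ 2 * M) * U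
      = Polynomial.C X' + Polynomial.X + (p : S[X]) * Polynomial.X ^ 2 * N) :
    (∃ V, U = 1 + (p : S[X]) * V) ∧ ∃ r : S, X' - a = (p : S) * r := by
  set q : S[X] := Polynomial.X + Polynomial.C a with hq
  have hqU : q * U + (p : S[X]) * (Polynomial.X ^ 2 * M * U)
      = Polynomial.C X' + Polynomial.X + (p : S[X]) * (Polynomial.X ^ 2 * N) := by
    have h' : (Polynomial.C a + Polynomial.X + (p : S[X]) * Polynomial.X ^ 2 * M) * U
        = q * U + (p : S[X]) * (Polynomial.X ^ 2 * M * U) := by rw [hq]; noncomm_ring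
    rw [← h', h, mul_assoc]
  have hstep : q * (U - 1) = Polynomial.C (X' - a)
      + (p : S[X]) * (Polynomial.X ^ 2 * N - Polynomial.X ^ 2 * M * U) := by
    have h1 : q * U = Polynomial.C X' + Polynomial.X
        + (p : S[X]) * (Polynomial.X ^ 2 * N) - (p : S[X]) * (Polynomial.X ^ 2 * M * U) :=
      eq_sub_of_add_eq hqU
    rw [mul_sub, mul_one, h1, hq, map_sub, mul_sub]
    abel
  obtain ⟨V, r, hVr⟩ := aux_div_exists a (Polynomial.X ^ 2 * N - Polynomial.X ^ 2 * M * U)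
  have central1 : ∀ x y : S[X], x * ((p : S[X]) * y) = (p : S[X]) * (x * y) := by
    intro x y; simpa using aux_central p 1 x y
  have pcC1 : ∀ y : S, (p : S[X]) * Polynomial.C y = Polynomial.C ((p : S) * y) := by
    intro y; simpa using aux_pcC p 1 y
  have hCr : Polynomial.C r = (Polynomial.X ^ 2 * N - Polynomial.X ^ 2 * M * U) - q * V :=
    eq_sub_of_add_eq' hVr
  have key : q * (U - 1 - (p : S[X]) * V) = Polynomial.C (X' - a + (p : S) * r) := by
    calc q * (U - 1 - (p : S[X]) * V)
        = q * (U - 1) - q * ((p : S[X]) * V) := by rw [mul_sub]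
      _ = Polynomial.C (X' - a)
          + (p : S[X]) * (Polynomial.X ^ 2 * N - Polynomial.X ^ 2 * M * U)
          - (p : S[X]) * (q * V) := by rw [hstep, central1]
      _ = Polynomial.C (X' - a)
          + (p : S[X]) * ((Polynomial.X ^ 2 * N - Polynomial.X ^ 2 * M * U) - q * V) := by
          rw [mul_sub (p : S[X]) (Polynomial.X ^ 2 * N - Polynomial.X ^ 2 * M * U) (q * V)]
          abel
      _ = Polynomial.C (X' - a) + (p : S[X]) * Polynomial.C r := by rw [← hCr]
      _ = Polynomial.C (X' - a + (p : S) * r) := by rw [pcC1, map_add]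
  obtain ⟨hU1, hXr⟩ := aux_div_unique a _ _ key
  constructor
  · refine ⟨V, ?_⟩
    rw [sub_sub, sub_eq_zero] at hU1
    exact hU1
  · refine ⟨-r, ?_⟩
    rw [mul_neg]
    exact eq_neg_of_add_eq_zero_left hXr

end Aux

/-- Finite noncommutative Weierstrass preparation. Let `p` be a
prime, `k, n ≥ 1`, `A_k = M_n(ℤ/p^k ℤ)`, and `M(t), N(t) ∈ A_k[t]`. Then for every
`X ∈ A_k` there exist unique `U(t) ∈ A_k[t]` and `X' ∈ A_k` such that
`(X + I_n t + p I_n t² M(t)) · U(t) = X' + I_n t + p I_n t² N(t)` in `A_k[t]`.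
Moreover `U(t) ∈ I_n + p A_k[t]` and `X' ≡ X (mod p)` (entrywise). -/
theorem stmt_16 (p k n : ℕ) [Fact p.Prime] (hk : 1 ≤ k) (hn : 1 ≤ n)
    (M N : Polynomial (Matrix (Fin n) (Fin n) (ZMod (p ^ k))))
    (X : Matrix (Fin n) (Fin n) (ZMod (p ^ k))) :
    (∃! UX : Polynomial (Matrix (Fin n) (Fin n) (ZMod (p ^ k))) ×
        Matrix (Fin n) (Fin n) (ZMod (p ^ k)),
      (Polynomial.C X + Polynomial.X +
          (p : Polynomial (Matrix (Fin n) (Fin n) (ZMod (p ^ k)))) * Polynomial.X ^ 2 * M)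
        * UX.1 =
      Polynomial.C UX.2 + Polynomial.X +
          (p : Polynomial (Matrix (Fin n) (Fin n) (ZMod (p ^ k)))) * Polynomial.X ^ 2 * N) ∧
    (∀ (U : Polynomial (Matrix (Fin n) (Fin n) (ZMod (p ^ k))))
        (X' : Matrix (Fin n) (Fin n) (ZMod (p ^ k))),
      (Polynomial.C X + Polynomial.X +
          (p : Polynomial (Matrix (Fin n) (Fin n) (ZMod (p ^ k)))) * Polynomial.X ^ 2 * M)
        * U =
      Polynomial.C X' + Polynomial.X +
          (p : Polynomial (Matrix (Fin n) (Fin n) (ZMod (p ^ k)))) * Polynomial.X ^ 2 * N →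
      (∃ V, U = 1 + (p : Polynomial (Matrix (Fin n) (Fin n) (ZMod (p ^ k)))) * V) ∧
        (∀ i j, (p : ZMod (p ^ k)) ∣ (X' - X) i j)) := by
  haveI : Fact (1 < p ^ k) := ⟨Nat.one_lt_pow (by omega) (Fact.out (p := p.Prime)).one_lt⟩
  haveI : Nonempty (Fin n) := ⟨⟨0, hn⟩⟩
  have hp0 : ((p : Polynomial (Matrix (Fin n) (Fin n) (ZMod (p ^ k))))) ^ k = 0 := by
    rw [← Nat.cast_pow,
      ← map_natCast (Polynomial.C : Matrix (Fin n) (Fin n) (ZMod (p ^ k)) →+* _) (p ^ k),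
      ← map_natCast (algebraMap (ZMod (p ^ k)) (Matrix (Fin n) (Fin n) (ZMod (p ^ k)))) (p ^ k),
      ZMod.natCast_self, map_zero, map_zero]
  constructor
  · obtain ⟨U₀, Y₀, h₀⟩ := aux_exists p k hp0 X M
      (Polynomial.X +
        (p : Polynomial (Matrix (Fin n) (Fin n) (ZMod (p ^ k)))) * Polynomial.X ^ 2 * N)
    have h₀' : (Polynomial.C X + Polynomial.X +
        (p : Polynomial (Matrix (Fin n) (Fin n) (ZMod (p ^ k)))) * Polynomial.X ^ 2 * M) * U₀
        = Polynomial.C Y₀ + Polynomial.X +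
          (p : Polynomial (Matrix (Fin n) (Fin n) (ZMod (p ^ k)))) * Polynomial.X ^ 2 * N := by
      rw [h₀, ← add_assoc]
    refine ⟨(U₀, Y₀), h₀', ?_⟩
    rintro ⟨U, Y⟩ hUY
    dsimp only at hUY ⊢
    have hdiff : (Polynomial.C X + Polynomial.X +
        (p : Polynomial (Matrix (Fin n) (Fin n) (ZMod (p ^ k)))) * Polynomial.X ^ 2 * M)
        * (U - U₀) = Polynomial.C (Y - Y₀) := by
      rw [mul_sub, hUY, h₀', map_sub]
      abel
    obtain ⟨hU, hY⟩ := aux_zero p k hp0 X M _ _ hdiff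
    simp only [Prod.mk.injEq]
    exact ⟨sub_eq_zero.mp hU, sub_eq_zero.mp hY⟩
  · intro U X' hUX
    obtain ⟨⟨V, hV⟩, ⟨r, hr⟩⟩ := aux_more p X X' M N U hUX
    refine ⟨⟨V, hV⟩, ?_⟩
    intro i j
    refine ⟨r i j, ?_⟩
    rw [hr, ← nsmul_eq_mul]
    simp [Matrix.smul_apply, nsmul_eq_mul]
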